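/- Let X be a topological space and let i be a natural number. Define Ran_{≤ i}(X) as the set of nonempty finite subsets S ⊆ X with |S| ≤ i that meet every connected component of X, with the quotient topology induced by the image maps X^I → Ran_{≤i}(X) for all sets I of cardinality i (the coarsest topology making these maps continuous). If f : X → Y is an open embedding surjective on connected components, then the induced map Ran_{≤i}(f) : Ran_{≤i}(X) → Ran_{≤i}(Y), S ↦ f(S), is injective and continuous. -/
import Mathlib


open Topology
/-- The bounded Ran space `Ran_{≤ i}(X)`, as a set: nonempty finite subsets `S ⊆ X` of
cardinality at most `i` which meet every connected component of `X`. -/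
def RanSet (X : Type*) [TopologicalSpace X] (i : ℕ) : Set (Set X) :=
  {S | S.Finite ∧ S.Nonempty ∧ S.ncard ≤ i ∧ ∀ x : X, ∃ s ∈ S, s ∈ connectedComponent x}

/-- The topology on `Ran_{≤ i}(X)` induced by the image maps `X^I → Ran_{≤ i}(X)`
for `I` of cardinality `i` (the quotient topology: the finest/universal topology making
these maps continuous, defined on tuples whose image lies in `Ran_{≤ i}(X)`). -/
def ranTopology (X : Type*) [TopologicalSpace X] (i : ℕ) :
    TopologicalSpace (RanSet X i) :=
  TopologicalSpace.coinduced
    (fun g : {g : Fin i → X // Set.range g ∈ RanSet X i} =>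
      (⟨Set.range g.1, g.2⟩ : RanSet X i))
    inferInstance

/-- If `f : X → Y` is an open embedding which is surjective on connected components, then
the induced map `Ran_{≤i}(f) : Ran_{≤i}(X) → Ran_{≤i}(Y)`, `S ↦ f(S)`, is well defined,
injective and continuous. -/
theorem ranMap_injective_continuous {X Y : Type*} [TopologicalSpace X] [TopologicalSpace Y]
    (i : ℕ) (f : X → Y) (hf : IsOpenEmbedding f)
    (hsurj : ∀ y : Y, ∃ x : X, f x ∈ connectedComponent y) :
    ∃ F : RanSet X i → RanSet Y i,
      (∀ S : RanSet X i, (F S : Set Y) = f '' (S : Set X)) ∧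
      Function.Injective F ∧
      @Continuous _ _ (ranTopology X i) (ranTopology Y i) F := by
  have hmem : ∀ S ∈ RanSet X i, f '' S ∈ RanSet Y i := by
    intro S hS
    obtain ⟨hfin, hne, hcard, hcomp⟩ := hS
    refine ⟨hfin.image f, hne.image f, ?_, ?_⟩
    · rwa [Set.ncard_image_of_injective S hf.injective]
    · intro y
      obtain ⟨x, hx⟩ := hsurj y
      obtain ⟨s, hsS, hsx⟩ := hcomp x
      refine ⟨f s, Set.mem_image_of_mem f hsS, ?_⟩
      have h1 : f s ∈ connectedComponent (f x) :=
        hf.continuous.image_connectedComponent_subset x ⟨s, hsx, rfl⟩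
      rwa [← connectedComponent_eq hx] at h1
  refine ⟨fun S => ⟨f '' S.1, hmem S.1 S.2⟩, fun S => rfl, ?_, ?_⟩
  · intro S T h
    apply Subtype.ext
    have := congrArg (fun s : RanSet Y i => (s : Set Y)) h
    exact Set.image_injective.2 hf.injective this
  · letI : TopologicalSpace (RanSet X i) := ranTopology X i
    letI : TopologicalSpace (RanSet Y i) := ranTopology Y i
    rw [ranTopology, continuous_coinduced_dom]
    have hlift : Continuous
        (fun g : {g : Fin i → X // Set.range g ∈ RanSet X i} =>
          (⟨f ∘ g.1, by rw [Set.range_comp]; exact hmem _ g.2⟩ :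
            {g : Fin i → Y // Set.range g ∈ RanSet Y i})) := by
      refine Continuous.subtype_mk ?_ _
      exact continuous_pi fun j => hf.continuous.comp
        ((continuous_apply j).comp continuous_subtype_val)
    have hq : Continuous
        (fun g : {g : Fin i → Y // Set.range g ∈ RanSet Y i} =>
          (⟨Set.range g.1, g.2⟩ : RanSet Y i)) := continuous_coinduced_rng
    have := hq.comp hlift
    convert this using 1
    funext g
    exact Subtype.ext (Set.range_comp f g.1).symm
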